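/- Let x ≠ y be points in the Euclidean plane, r > 0, d = dist(x,y) with 0 < d < 2r, m = (x+y)/2, n a unit vector orthogonal to y − x, and h = sqrt(r² − d²/4). Let T⁺ be the convex hull of the three points x + r·n, y + r·n, and m + h·n. Then T⁺ contains no point that lies in both open disks {p : dist(p,x) < r} and {p : dist(p,y) < r}. -/

import Mathlib

open scoped RealInnerProductSpace

/-- the triangle T⁺ spanned by x + r·n, y + r·n and m + h·n contains no
point lying in both open disks of radius r around x and y. -/
theorem triangle_avoids_lens
    (x y n : EuclideanSpace ℝ (Fin 2)) (r d h : ℝ) (hr : 0 < r) (hxy : x ≠ y)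
    (hd : d = dist x y) (hd0 : 0 < d) (hd2 : d < 2 * r)
    (hn : ‖n‖ = 1) (hperp : ⟪n, y - x⟫ = 0)
    (hh : h = Real.sqrt (r ^ 2 - d ^ 2 / 4)) :
    ∀ p ∈ convexHull ℝ
        ({x + r • n, y + r • n, (2 : ℝ)⁻¹ • (x + y) + h • n} :
          Set (EuclideanSpace ℝ (Fin 2))),
      ¬ (dist p x < r ∧ dist p y < r) := by
  intro p hp
  rintro ⟨hpx, hpy⟩
  set m : EuclideanSpace ℝ (Fin 2) := (2:ℝ)⁻¹ • (x + y) with hm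
  have hnyx : ⟪n, y⟫ = ⟪n, x⟫ := by
    rw [inner_sub_right] at hperp; linarith
  have hd4 : (0:ℝ) ≤ r ^ 2 - d ^ 2 / 4 := by nlinarith
  have hh0 : 0 ≤ h := hh ▸ Real.sqrt_nonneg _
  have hh2 : h ^ 2 = r ^ 2 - d ^ 2 / 4 := by rw [hh, Real.sq_sqrt hd4]
  have hhr : h ≤ r := by nlinarith
  have hnm : ⟪n, m⟫ = ⟪n, x⟫ := by
    simp only [hm, real_inner_smul_right, inner_add_right, hnyx]; ring
  have hconv : Convex ℝ {q : EuclideanSpace ℝ (Fin 2) | ⟪n, m⟫ + h ≤ ⟪n, q⟫} := by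
    apply convex_halfSpace_ge
    exact ⟨fun a b => inner_add_right _ _ _, fun c a => real_inner_smul_right _ _ _⟩
  have hnn : ⟪n, n⟫ = 1 := by
    rw [real_inner_self_eq_norm_sq, hn]; norm_num
  have hsub : ({x + r • n, y + r • n, m + h • n} : Set (EuclideanSpace ℝ (Fin 2)))
      ⊆ {q | ⟪n, m⟫ + h ≤ ⟪n, q⟫} := by
    rintro q (rfl | rfl | rfl) <;>
      simp only [Set.mem_setOf_eq, inner_add_right, real_inner_smul_right, hnn, hnm, hnyx] <;>
      linarith
  have hp' : ⟪n, m⟫ + h ≤ ⟪n, p⟫ := convexHull_min hsub hconv hp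
  have hb : h ≤ ⟪n, p - m⟫ := by rw [inner_sub_right]; linarith
  have hbn : ⟪n, p - m⟫ ≤ ‖p - m‖ := by
    calc ⟪n, p - m⟫ ≤ ‖n‖ * ‖p - m‖ := real_inner_le_norm _ _
    _ = ‖p - m‖ := by rw [hn, one_mul]
  have hpm2 : h ^ 2 ≤ ‖p - m‖ ^ 2 := by nlinarith
  have hpar : ‖p - x‖ ^ 2 + ‖p - y‖ ^ 2
      = 2 * (‖p - m‖ ^ 2 + ‖(2:ℝ)⁻¹ • (y - x)‖ ^ 2) := by
    have h1 : p - x = (p - m) + (2:ℝ)⁻¹ • (y - x) := by rw [hm]; module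
    have h2 : p - y = (p - m) - (2:ℝ)⁻¹ • (y - x) := by rw [hm]; module
    rw [h1, h2]
    have := parallelogram_law_with_norm ℝ (p - m) ((2:ℝ)⁻¹ • (y - x))
    simp only [pow_two]
    simpa only [pow_two] using this
  have hyx : ‖(2:ℝ)⁻¹ • (y - x)‖ = d / 2 := by
    rw [norm_smul, hd, dist_eq_norm, ← norm_neg (x - y)]
    simp
    ring
  have hdx : ‖p - x‖ < r := by rwa [← dist_eq_norm]
  have hdy : ‖p - y‖ < r := by rwa [← dist_eq_norm]
  have h0x : 0 ≤ ‖p - x‖ := norm_nonneg _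
  have h0y : 0 ≤ ‖p - y‖ := norm_nonneg _
  rw [hyx] at hpar
  nlinarith [hpar, hpm2, hh2]
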